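/- In the wristband-drink world model with causal counterfactual indicators I_{Y₀}, I_{Y₁} as above, the optimal policy for the reward R_a + R_d(Y₀, Y₁) = −I_p − I_i + I_d·I_{Y₀} − I_d·I_{Y₁} chooses a₀ = g iff o₀ = l_m (never i), and at step 1 gives a drink iff o₁ ∈ {w, w_p}. -/

import Mathlib

/- The wristband-drink world model of Armstrong's indifference paper.
`Omega` is the hidden randomness: maturity `mat` (prob 1/2), whether looks
match maturity `e` (prob 2/3), human ID check `idc` (prob 1/100), and a fair
coin `coin` used when the drink action is `i`. Everything else is a
deterministic function of `Omega` and the policy. -/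

namespace Wristband

inductive Act | g | ng | i
  deriving DecidableEq

instance : Fintype Act where
  elems := {Act.g, Act.ng, Act.i}
  complete := fun x => by cases x <;> simp

inductive O1 | w | wp | nw | nwp
  deriving DecidableEq

instance : Fintype O1 where
  elems := {O1.w, O1.wp, O1.nw, O1.nwp}
  complete := fun x => by cases x <;> simp

structure Omega where
  mat : Bool
  e : Bool
  idc : Bool
  coin : Bool
  deriving DecidableEq, Fintype

noncomputable def P (ω : Omega) : ℝ :=
  (1 / 2) * (if ω.e then 2 / 3 else 1 / 3) *
    (if ω.idc then 1 / 100 else 99 / 100) * (1 / 2)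

def obs0 (ω : Omega) : Bool := if ω.e then ω.mat else !ω.mat

def step1 (ω : Omega) : Act → O1
  | Act.i => if ω.mat then O1.w else O1.nw
  | Act.g => if ω.mat then O1.w else if ω.idc then O1.nwp else O1.w
  | Act.ng => if ω.mat then (if ω.idc then O1.wp else O1.nw) else O1.nw

def step2 (ω : Omega) : Act → Bool
  | Act.g => true
  | Act.ng => false
  | Act.i => ω.coin

structure Pol where
  act0 : Bool → Act
  act1 : Bool → Act → O1 → Act

structure Hist where
  o0 : Bool
  a0 : Act
  o1 : O1
  a1 : Act
  o2 : Bool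
  deriving DecidableEq, Fintype

def trace (ω : Omega) (π : Pol) : Hist :=
  let o0 := obs0 ω
  let a0 := π.act0 o0
  let o1 := step1 ω a0
  let a1 := π.act1 o0 a0 o1
  ⟨o0, a0, o1, a1, step2 ω a1⟩

/-- Expected reward from the start under policy `π`. -/
noncomputable def ER (R : Hist → ℝ) (π : Pol) : ℝ := ∑ ω, P ω * R (trace ω π)

def wrist : O1 → Bool
  | O1.w => true | O1.wp => true | _ => false

def pen : O1 → Bool
  | O1.wp => true | O1.nwp => true | _ => false

noncomputable def Ip (h : Hist) : ℝ := if pen h.o1 then 1 else 0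
noncomputable def Ii (h : Hist) : ℝ := if h.a0 = Act.i then 1 else 0
noncomputable def Iw (h : Hist) : ℝ := if wrist h.o1 then 1 else 0
noncomputable def Idr (h : Hist) : ℝ := if h.o2 then 1 else 0

/-- `R_a = -I_p - I_i`. -/
noncomputable def Ra (h : Hist) : ℝ := -Ip h - Ii h
/-- `R_d(X_w) = I_d (2 I_w - 1)`. -/
noncomputable def Rd (h : Hist) : ℝ := Idr h * (2 * Iw h - 1)

/-- Partial histories (prefixes): empty, after `o₀`, and after `o₀a₀o₁`. -/
inductive Pre
  | root
  | obs (o0 : Bool)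
  | mid (o0 : Bool) (a0 : Act) (o1 : O1)

def extendB (h : Hist) : Pre → Bool
  | Pre.root => true
  | Pre.obs o0 => decide (h.o0 = o0)
  | Pre.mid o0 a0 o1 => decide (h.o0 = o0 ∧ h.a0 = a0 ∧ h.o1 = o1)

/-- Probability of the partial history `p` under `π`. -/
noncomputable def den (p : Pre) (π : Pol) : ℝ :=
  ∑ ω, if extendB (trace ω π) p then P ω else 0

/-- Conditional expectation `E^π[I | p]` of an indicator/reward `I` given the
partial history `p`, under policy `π`. -/
noncomputable def cexp (I : Hist → ℝ) (p : Pre) (π : Pol) : ℝ :=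
  (∑ ω, if extendB (trace ω π) p then P ω * I (trace ω π) else 0) / den p π

/-- Posterior probability that the attendee is mature given `(o₀, a₀, o₁)`. -/
noncomputable def postM (o0 : Bool) (a0 : Act) (o1 : O1) : ℝ :=
  (∑ ω, if obs0 ω = o0 ∧ step1 ω a0 = o1 ∧ ω.mat then P ω else 0) /
  (∑ ω, if obs0 ω = o0 ∧ step1 ω a0 = o1 then P ω else 0)

/-- `I_{Y₀}`: posterior probability of mature AND human-ID-checked. -/
noncomputable def IY0m (o0 : Bool) (a0 : Act) (o1 : O1) : ℝ :=
  (∑ ω, if obs0 ω = o0 ∧ step1 ω a0 = o1 ∧ ω.mat ∧ ω.idc then P ω else 0) /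
  (∑ ω, if obs0 ω = o0 ∧ step1 ω a0 = o1 then P ω else 0)

/-- `I_{Y₁}`: posterior probability of immature AND human-ID-checked. -/
noncomputable def IY1m (o0 : Bool) (a0 : Act) (o1 : O1) : ℝ :=
  (∑ ω, if obs0 ω = o0 ∧ step1 ω a0 = o1 ∧ ω.mat = false ∧ ω.idc then P ω else 0) /
  (∑ ω, if obs0 ω = o0 ∧ step1 ω a0 = o1 then P ω else 0)

noncomputable def IY0 (h : Hist) : ℝ := IY0m h.o0 h.a0 h.o1
noncomputable def IY1 (h : Hist) : ℝ := IY1m h.o0 h.a0 h.o1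

/-- The policy that gives everyone a wristband, then a drink iff wristband. -/
def giveAll : Pol := ⟨fun _ => Act.g, fun _ _ o1 => if wrist o1 then Act.g else Act.ng⟩

/-- The policy that gives a wristband iff the attendee looks mature (`o₀ = l_m`),
then a drink iff wristband. -/
def lookPol : Pol :=
  ⟨fun o0 => if o0 then Act.g else Act.ng,
   fun _ _ o1 => if wrist o1 then Act.g else Act.ng⟩



def eOm : Omega ≃ Bool × Bool × Bool × Bool where
  toFun ω := (ω.mat, ω.e, ω.idc, ω.coin)
  invFun p := ⟨p.1, p.2.1, p.2.2.1, p.2.2.2⟩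
  left_inv _ := rfl
  right_inv _ := rfl

lemma sum_omega (f : Omega → ℝ) :
    ∑ ω, f ω = ∑ p : Bool × Bool × Bool × Bool, f ⟨p.1, p.2.1, p.2.2.1, p.2.2.2⟩ :=
  Fintype.sum_equiv eOm _ _ (fun _ => rfl)

lemma P_nonneg (ω : Omega) : 0 ≤ P ω := by
  unfold P; split_ifs <;> norm_num

lemma pointwise (h : Hist) :
    Ra h + Idr h * IY0 h - Idr h * IY1 h ≤ Ra h + max (IY0 h - IY1 h) 0 := by
  have : Idr h = 0 ∨ Idr h = 1 := by unfold Idr; split <;> simp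
  rcases this with H | H <;> rw [H]
  · simpa using le_max_right (IY0 h - IY1 h) (0:ℝ)
  · have := le_max_left (IY0 h - IY1 h) (0:ℝ); linarith

lemma ER_lookPol :
    ER (fun h => Ra h + Idr h * IY0 h - Idr h * IY1 h) lookPol = 1/600 := by
  simp only [ER, sum_omega, Fintype.sum_prod_type, Fintype.sum_bool,
    trace, lookPol, obs0, step1, step2, Ra, Rd, Ip, Ii, Iw, Idr, IY0, IY1,
    IY0m, IY1m, P, pen, wrist]
  simp
  norm_num

set_option maxHeartbeats 2000000 in
/-- The optimal policy for the causal-counterfactual reward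
`R_a + R_d(Y₀,Y₁) = -I_p - I_i + I_d·I_{Y₀} - I_d·I_{Y₁}` chooses `a₀ = g` iff
`o₀ = l_m` (never `i`), and at step 1 gives a drink iff `o₁ ∈ {w, w_p}` —
that is, the policy `lookPol` is optimal for this reward. -/
theorem stmt12 :
    ∀ π : Pol,
      ER (fun h => Ra h + Idr h * IY0 h - Idr h * IY1 h) π ≤
        ER (fun h => Ra h + Idr h * IY0 h - Idr h * IY1 h) lookPol := by
  intro π
  rw [ER_lookPol]
  obtain ⟨a0, a1⟩ := π
  calc ER (fun h => Ra h + Idr h * IY0 h - Idr h * IY1 h) ⟨a0, a1⟩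
      ≤ ∑ ω, P ω * (Ra (trace ω ⟨a0, a1⟩) +
          max (IY0 (trace ω ⟨a0, a1⟩) - IY1 (trace ω ⟨a0, a1⟩)) 0) := by
        refine Finset.sum_le_sum fun ω _ => ?_
        exact mul_le_mul_of_nonneg_left (pointwise _) (P_nonneg ω)
    _ ≤ 1/600 := by
        rcases h1 : a0 true <;> rcases h2 : a0 false <;>
        · simp only [sum_omega, Fintype.sum_prod_type, Fintype.sum_bool,
            trace, obs0, step1, step2, Ra, Ip, Ii, IY0, IY1,
            IY0m, IY1m, P, pen, wrist]
          simp [h1, h2]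
          norm_num [max_def]

end Wristband
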